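/- arXiv:1109.5197 — 2 statements merged into one kernel-verified Lean document; each statement's English description precedes it below -/
import Mathlib

section
/- Let f : [0,1]^N → [0,1]^N be differentiable, D a positive diagonal N×N real matrix, and x̄ a point with f(x̄) = x̄. If ‖f'(x̄)‖ < min_i D_ii / (√N · ‖D‖), where ‖·‖ is the Frobenius norm, then every eigenvalue λ of the Jacobian matrix D·f'(x̄) - D has negative real part. -/
/-- The unit cube `[0,1]^N` in `ℝ^N`. -/
def unitCube (N : ℕ) : Set (EuclideanSpace ℝ (Fin N)) :=
  {x | ∀ i, x i ∈ Set.Icc (0 : ℝ) 1}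

/-- The Frobenius norm of a real `N × N` matrix. -/
noncomputable def frobNorm {N : ℕ} (B : Matrix (Fin N) (Fin N) ℝ) : ℝ :=
  Real.sqrt (∑ i, ∑ j, (B i j) ^ 2)

/-- Stability lemma: if `f : [0,1]^N → [0,1]^N` is differentiable at a fixed point `x̄`
with Jacobian matrix `J`, `D` is a positive diagonal matrix, and
`‖J‖_F < min_i D_ii / (√N ‖D‖_F)`, then every eigenvalue of the Jacobian `D·J - D`
of the vector field `x ↦ D(f(x) - x)` at `x̄` has negative real part. -/
theorem steady_state_stable {N : ℕ}
    (f : EuclideanSpace ℝ (Fin N) → EuclideanSpace ℝ (Fin N))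
    (hmaps : Set.MapsTo f (unitCube N) (unitCube N))
    (J D : Matrix (Fin N) (Fin N) ℝ)
    (xbar : EuclideanSpace ℝ (Fin N)) (hxbar : xbar ∈ unitCube N)
    (hderiv : HasFDerivAt f (Matrix.toEuclideanCLM (𝕜 := ℝ) J : _) xbar)
    (hfix : f xbar = xbar)
    (hDdiag : ∀ i j, i ≠ j → D i j = 0) (hDpos : ∀ i, 0 < D i i)
    (hlt : ∀ i, frobNorm J < D i i / (Real.sqrt N * frobNorm D)) :
    ∀ lam : ℂ, (∃ v : Fin N → ℂ, v ≠ 0 ∧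
      ((D * J - D).map (Complex.ofReal)).mulVec v = lam • v) → lam.re < 0 := by
  rintro lam ⟨v, hv0, hev⟩
  -- Fin N is nonempty
  rcases isEmpty_or_nonempty (Fin N) with hE | hNE
  · exact absurd (Subsingleton.elim v 0) hv0
  -- pick index with max |v|
  obtain ⟨k, -, hk⟩ := Finset.exists_max_image Finset.univ (fun i => ‖v i‖)
    Finset.univ_nonempty
  have hvk : 0 < ‖v k‖ := by
    obtain ⟨i, hi⟩ := Function.ne_iff.mp hv0
    exact lt_of_lt_of_le (by simpa using hi) (hk i (Finset.mem_univ i))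
  -- row equation
  have hrow : (lam + (D k k : ℂ)) * v k = ∑ j, ((D k k * J k j : ℝ) : ℂ) * v j := by
    have h1 := congrFun hev k
    simp only [Matrix.mulVec, Matrix.map_apply, dotProduct, Matrix.sub_apply,
      Pi.smul_apply, smul_eq_mul, Complex.ofReal_sub, sub_mul,
      Finset.sum_sub_distrib] at h1
    have h2 : ∑ j, ((D * J) k j : ℂ) * v j = ∑ j, ((D k k * J k j : ℝ) : ℂ) * v j := by
      refine Finset.sum_congr rfl fun j _ => ?_
      congr 2
      rw [Matrix.mul_apply, Finset.sum_eq_single k]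
      · intro b _ hb; rw [hDdiag k b (Ne.symm hb), zero_mul]
      · simp
    have h3 : ∑ j, ((D k j : ℝ) : ℂ) * v j = (D k k : ℂ) * v k := by
      rw [Finset.sum_eq_single k]
      · intro b _ hb; rw [hDdiag k b (Ne.symm hb)]; simp
      · simp
    rw [h2, h3] at h1
    linear_combination -h1
  -- Gershgorin bound
  have habs : ‖lam + (D k k : ℂ)‖ ≤ D k k * ∑ j, |J k j| := by
    have h1 : ‖lam + (D k k : ℂ)‖ * ‖v k‖
        ≤ (D k k * ∑ j, |J k j|) * ‖v k‖ := by
      rw [← norm_mul, hrow]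
      refine (norm_sum_le _ _).trans ?_
      rw [Finset.mul_sum, Finset.sum_mul]
      refine Finset.sum_le_sum fun j _ => ?_
      rw [norm_mul, Complex.norm_real, Real.norm_eq_abs, abs_mul, abs_of_pos (hDpos k), mul_assoc, mul_assoc]
      exact mul_le_mul_of_nonneg_left
        (mul_le_mul_of_nonneg_left (hk j (Finset.mem_univ j)) (abs_nonneg _))
        (le_of_lt (hDpos k))
    exact le_of_mul_le_mul_right h1 hvk
  -- Cauchy–Schwarz
  have hCS : ∑ j, |J k j| ≤ Real.sqrt N * frobNorm J := by
    have h1 : (∑ j, |J k j|) ^ 2 ≤ (N : ℝ) * ∑ i, ∑ j, J i j ^ 2 := by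
      refine (sq_sum_le_card_mul_sum_sq).trans ?_
      simp only [Finset.card_univ, Fintype.card_fin, sq_abs]
      refine mul_le_mul_of_nonneg_left ?_ (Nat.cast_nonneg N)
      exact Finset.single_le_sum (f := fun i => ∑ j, J i j ^ 2)
        (fun i _ => Finset.sum_nonneg fun j _ => sq_nonneg _) (Finset.mem_univ k)
    calc ∑ j, |J k j| = Real.sqrt ((∑ j, |J k j|) ^ 2) := by
          rw [Real.sqrt_sq (Finset.sum_nonneg fun j _ => abs_nonneg _)]
      _ ≤ Real.sqrt ((N : ℝ) * ∑ i, ∑ j, J i j ^ 2) := Real.sqrt_le_sqrt h1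
      _ = Real.sqrt N * frobNorm J := by
          rw [Real.sqrt_mul (Nat.cast_nonneg N)]; rfl
  -- D k k ≤ frobNorm D
  have hDle : D k k ≤ frobNorm D := by
    have : D k k ^ 2 ≤ ∑ i, ∑ j, D i j ^ 2 := by
      calc D k k ^ 2 ≤ ∑ j, D k j ^ 2 :=
            Finset.single_le_sum (f := fun j => D k j ^ 2)
              (fun j _ => sq_nonneg _) (Finset.mem_univ k)
        _ ≤ ∑ i, ∑ j, D i j ^ 2 :=
            Finset.single_le_sum (f := fun i => ∑ j, D i j ^ 2)
              (fun i _ => Finset.sum_nonneg fun j _ => sq_nonneg _) (Finset.mem_univ k)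
    calc D k k = Real.sqrt (D k k ^ 2) := (Real.sqrt_sq (hDpos k).le).symm
      _ ≤ frobNorm D := Real.sqrt_le_sqrt this
  have hNpos : (0:ℝ) < Real.sqrt N := by
    have : (1:ℝ) ≤ N := by
      have := hNE; exact_mod_cast Nat.one_le_iff_ne_zero.mpr (by
        rintro rfl; exact (Fin.elim0 this.some))
    exact Real.sqrt_pos.mpr (by linarith)
  have hfrobDpos : 0 < frobNorm D := lt_of_lt_of_le (hDpos k) hDle
  have hkey : Real.sqrt N * frobNorm D * frobNorm J < D k k := by
    have := hlt k
    rw [lt_div_iff₀ (by positivity)] at this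
    linarith [this]
  have hJnn : 0 ≤ frobNorm J := Real.sqrt_nonneg _
  have hfinal : ‖lam + (D k k : ℂ)‖ < D k k := by
    calc ‖lam + (D k k : ℂ)‖ ≤ D k k * ∑ j, |J k j| := habs
      _ ≤ D k k * (Real.sqrt N * frobNorm J) :=
          mul_le_mul_of_nonneg_left hCS (hDpos k).le
      _ ≤ frobNorm D * (Real.sqrt N * frobNorm J) :=
          mul_le_mul_of_nonneg_right hDle (by positivity)
      _ = Real.sqrt N * frobNorm D * frobNorm J := by ring
      _ < D k k := hkey
  have hre : (lam + (D k k : ℂ)).re ≤ ‖lam + (D k k : ℂ)‖ := Complex.re_le_norm _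
  simp only [Complex.add_re, Complex.ofReal_re] at hre
  linarith
end

section
/- Uniqueness part of the main theorem: In the setting where g_n : [0,1]^N → [0,1]^N are differentiable, if additionally the derivatives g_n' converge uniformly to 0 on each K_x, then there exists n₁ such that for all n ≥ n₁ and each x ∈ S with f(x) = x, the fixed point of g_n in the convex compact set K_x is unique. -/
open Filter

/-- Uniqueness part of the main theorem: in the setting of the correspondence theorem,
if the `g_n` are differentiable and `g_n' → 0` uniformly on each `K_x`, then eventually
(in `n`) for each fixed point `x` of `f`, the fixed point of `g_n` in `K_x` is unique:
`g_n` has exactly one fixed point in `K_x`. -/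
theorem main_uniqueness {N : ℕ} {S : Type*} [Fintype S] (f : S → S)
    (K : S → Set (EuclideanSpace ℝ (Fin N)))
    (hsub : ∀ x, K x ⊆ unitCube N) (hne : ∀ x, (K x).Nonempty)
    (hconv : ∀ x, Convex ℝ (K x)) (hcomp : ∀ x, IsCompact (K x))
    (hdisj : ∀ x y, x ≠ y → Disjoint (K x) (K y))
    (L : S → EuclideanSpace ℝ (Fin N)) (hL : ∀ x, L x ∈ K x)
    (hLint : ∀ x, K x ∈ nhdsWithin (L x) (unitCube N))
    (g : ℕ → EuclideanSpace ℝ (Fin N) → EuclideanSpace ℝ (Fin N))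
    (hgdiff : ∀ n, Differentiable ℝ (g n))
    (hgmaps : ∀ n, Set.MapsTo (g n) (unitCube N) (unitCube N))
    (hunif : ∀ x, TendstoUniformlyOn (fun n => g n) (fun _ => L (f x)) atTop (K x))
    (hderiv : ∀ x, TendstoUniformlyOn (fun n y => fderiv ℝ (g n) y)
      (fun _ => (0 : EuclideanSpace ℝ (Fin N) →L[ℝ] EuclideanSpace ℝ (Fin N))) atTop (K x)) :
    ∃ n₁ : ℕ, ∀ n ≥ n₁, ∀ x : S, f x = x → ∃! p, p ∈ K x ∧ g n p = p := by
  have key : ∀ᶠ n in atTop, ∀ x : S, f x = x → ∃! p, p ∈ K x ∧ g n p = p := by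
    rw [eventually_all]
    intro x
    by_cases hfx : f x = x
    · -- get a relative neighborhood radius
      obtain ⟨ε, εpos, hball⟩ := Metric.mem_nhdsWithin_iff.1 (hLint x)
      have h1 := (Metric.tendstoUniformlyOn_iff.1 (hunif x)) (ε / 4) (by positivity)
      have h2 := (Metric.tendstoUniformlyOn_iff.1 (hderiv x)) (1 / 2) (by norm_num)
      filter_upwards [h1, h2] with n hn1 hn2
      intro _
      -- Lipschitz bound on K x
      have hlip : ∀ p ∈ K x, ∀ q ∈ K x, ‖g n p - g n q‖ ≤ (1 / 2 : ℝ) * ‖p - q‖ := by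
        intro p hp q hq
        refine (hconv x).norm_image_sub_le_of_norm_fderiv_le
          (fun y _ => hgdiff n y) (fun y hy => ?_) hq hp
        have := hn2 y hy
        rw [dist_zero_left] at this
        exact this.le
      -- uniqueness of fixed points in K x
      have huniq : ∀ p ∈ K x, g n p = p → ∀ q ∈ K x, g n q = q → p = q := by
        intro p hp hpf q hq hqf
        have h := hlip p hp q hq
        rw [hpf, hqf] at h
        have : ‖p - q‖ ≤ 0 := by nlinarith [norm_nonneg (p - q)]
        have := le_antisymm this (norm_nonneg _)
        rwa [norm_eq_zero, sub_eq_zero] at this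
      -- existence via Banach on B
      set B : Set (EuclideanSpace ℝ (Fin N)) := Metric.closedBall (L x) (ε / 2) ∩ K x with hB
      have hLB : L x ∈ B := ⟨Metric.mem_closedBall_self (by positivity), hL x⟩
      have hdistL : ∀ p ∈ K x, dist (g n p) (L x) ≤ 1 / 2 * dist p (L x) + ε / 4 := by
        intro p hp
        have h1 : dist (g n p) (g n (L x)) ≤ 1 / 2 * dist p (L x) := by
          rw [dist_eq_norm, dist_eq_norm]; exact hlip p hp (L x) (hL x)
        have h2 : dist (g n (L x)) (L x) ≤ ε / 4 := by
          have := hn1 (L x) (hL x)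
          rw [hfx, dist_comm] at this
          exact this.le
        calc dist (g n p) (L x) ≤ dist (g n p) (g n (L x)) + dist (g n (L x)) (L x) :=
              dist_triangle _ _ _
          _ ≤ 1 / 2 * dist p (L x) + ε / 4 := add_le_add h1 h2
      have hmaps : Set.MapsTo (g n) B B := by
        intro p ⟨hp1, hp2⟩
        have hd : dist (g n p) (L x) ≤ ε / 2 := by
          have := hdistL p hp2
          have hp1' := Metric.mem_closedBall.1 hp1
          nlinarith
        have hcube : g n p ∈ unitCube N := hgmaps n (hsub x hp2)
        refine ⟨Metric.mem_closedBall.2 hd, hball ⟨Metric.mem_ball.2 ?_, hcube⟩⟩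
        calc dist (g n p) (L x) ≤ ε / 2 := hd
          _ < ε := by linarith
      have hBc : IsComplete B :=
        (Metric.isClosed_closedBall.inter (hcomp x).isClosed).isComplete
      have hcontr : ContractingWith (1 / 2 : NNReal) (hmaps.restrict (g n) B B) := by
        constructor
        · rw [← NNReal.coe_lt_coe]; norm_num
        · apply LipschitzWith.of_dist_le_mul
          rintro ⟨p, hp⟩ ⟨q, hq⟩
          have := hlip p hp.2 q hq.2
          simp only [Set.MapsTo.restrict, Subtype.dist_eq, Subtype.map]
          rw [dist_eq_norm, dist_eq_norm]
          calc ‖g n p - g n q‖ ≤ (1 / 2 : ℝ) * ‖p - q‖ := this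
            _ = ((1 / 2 : NNReal) : ℝ) * ‖p - q‖ := by norm_num
      obtain ⟨y, hyB, hyfix, -⟩ :=
        hcontr.exists_fixedPoint' hBc hmaps hLB (edist_ne_top _ _)
      exact ⟨y, ⟨hyB.2, hyfix⟩, fun q ⟨hq1, hq2⟩ => huniq q hq1 hq2 y hyB.2 hyfix⟩
    · exact Eventually.of_forall fun n h => absurd h hfx
  obtain ⟨n₁, hn₁⟩ := eventually_atTop.1 key
  exact ⟨n₁, hn₁⟩
end
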